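/- If Y and Z are independent continuous random variables (Y having an atomless distribution), then AUC(c) = P(Y₁ > Y₂ | Z₁ > c, Z₂ ≤ c) = 1/2 for every threshold c with P(Z > c) ∈ (0,1), and consequently AUC_I = ∫ AUC(t) f_c(t) dt = 1/2 for any probability density f_c supported on {t : 0 < P(Z > t) < 1}. -/
import Mathlib


open MeasureTheory Set ProbabilityTheory
open scoped ENNReal

noncomputable def AUC {Ω : Type*} [MeasurableSpace Ω] (μ : Measure Ω)
    (Y Z : Ω → ℝ) (c : ℝ) : ℝ :=
  if (μ.prod μ) {p : Ω × Ω | Z p.1 > c ∧ Z p.2 ≤ c} = 0 then 1/2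
  else ((μ.prod μ) ({p : Ω × Ω | Y p.1 > Y p.2} ∩ {p | Z p.1 > c ∧ Z p.2 ≤ c})).toReal /
    ((μ.prod μ) {p : Ω × Ω | Z p.1 > c ∧ Z p.2 ≤ c}).toReal

/-- If `Y` and `Z` are independent and `Y` has an atomless distribution, then
`AUC(c) = 1/2` for every `c` with `0 < P(Z > c) < 1`, and consequently
`AUC_I = ∫ AUC(t) f_c(t) dt = 1/2` for any probability density `f_c` supported on
`{t : 0 < P(Z > t) < 1}`. -/
theorem auc_of_indep_eq_half {Ω : Type*} [MeasurableSpace Ω] (μ : Measure Ω)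
    [IsProbabilityMeasure μ] (Y Z : Ω → ℝ) (hY : Measurable Y) (hZ : Measurable Z)
    (hindep : IndepFun Y Z μ) (hatomless : ∀ y : ℝ, μ {ω | Y ω = y} = 0)
    (f : ℝ → ℝ) (hf_nonneg : ∀ t, 0 ≤ f t) (hf_int : ∫ t, f t = 1)
    (hf_supp : ∀ t, f t ≠ 0 → 0 < μ {ω | Z ω > t} ∧ μ {ω | Z ω > t} < 1) :
    (∀ c, 0 < μ {ω | Z ω > c} → μ {ω | Z ω > c} < 1 → AUC μ Y Z c = 1/2) ∧
      ∫ t, AUC μ Y Z t * f t = 1/2 := by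
  set ν : Measure ℝ := μ.map Y with hνdef
  haveI hνprob : IsProbabilityMeasure ν := Measure.isProbabilityMeasure_map hY.aemeasurable
  have hν_atom : ∀ y : ℝ, ν {y} = 0 := by
    intro y
    rw [hνdef, Measure.map_apply hY (measurableSet_singleton y)]
    exact hatomless y
  have hg_mono : Monotone fun y : ℝ => ν (Iio y) :=
    fun a b hab => measure_mono (Iio_subset_Iio hab)
  have hg : Measurable fun y : ℝ => ν (Iio y) := hg_mono.measurable
  have hIio : ∀ y : ℝ, μ (Y ⁻¹' Iio y) = ν (Iio y) := fun y => by
    rw [hνdef, Measure.map_apply hY measurableSet_Iio]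
  -- the "half" lemma : ∫ F dν = 1/2 where F is the CDF
  have half : ∫⁻ y, ν (Iio y) ∂ν = 1/2 := by
    have hset1 : MeasurableSet {q : ℝ × ℝ | q.2 < q.1} :=
      measurableSet_lt measurable_snd measurable_fst
    have hset2 : MeasurableSet {q : ℝ × ℝ | q.1 < q.2} :=
      measurableSet_lt measurable_fst measurable_snd
    have h1 : (ν.prod ν) {q : ℝ × ℝ | q.2 < q.1} = ∫⁻ y, ν (Iio y) ∂ν := by
      rw [Measure.prod_apply hset1]; rfl
    have h2 : (ν.prod ν) {q : ℝ × ℝ | q.1 < q.2} = ∫⁻ y, ν (Ioi y) ∂ν := by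
      rw [Measure.prod_apply hset2]; rfl
    have hswap : (ν.prod ν) {q : ℝ × ℝ | q.1 < q.2} = (ν.prod ν) {q : ℝ × ℝ | q.2 < q.1} := by
      conv_lhs => rw [← Measure.prod_swap]
      rw [Measure.map_apply measurable_swap hset2]
      rfl
    have hsum : ∀ y : ℝ, ν (Iio y) + ν (Ioi y) = 1 := by
      intro y
      rw [← measure_union ((Set.Iio_disjoint_Ici le_rfl).mono_right Set.Ioi_subset_Ici_self) measurableSet_Ioi, Set.Iio_union_Ioi,
        measure_compl (measurableSet_singleton y) (measure_ne_top ν _), hν_atom y,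
        measure_univ, tsub_zero]
    have hadd : (∫⁻ y, ν (Iio y) ∂ν) + (∫⁻ y, ν (Ioi y) ∂ν) = 1 := by
      rw [← lintegral_add_left hg]
      simp_rw [hsum]
      simp
    have heqint : (∫⁻ y, ν (Ioi y) ∂ν) = ∫⁻ y, ν (Iio y) ∂ν := by
      rw [← h2, hswap, h1]
    rw [heqint] at hadd
    rw [ENNReal.eq_div_iff (two_ne_zero) (by norm_num : (2 : ℝ≥0∞) ≠ ⊤), two_mul]
    exact hadd
  -- measure of the conditioning event
  have hA : ∀ c : ℝ, MeasurableSet {ω | Z ω > c} := fun c => hZ measurableSet_Ioi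
  have hB : ∀ c : ℝ, MeasurableSet {ω | Z ω ≤ c} := fun c => hZ measurableSet_Iic
  have hm : ∀ c : ℝ, (μ.prod μ) {p : Ω × Ω | Z p.1 > c ∧ Z p.2 ≤ c}
      = μ {ω | Z ω > c} * μ {ω | Z ω ≤ c} := by
    intro c
    have : {p : Ω × Ω | Z p.1 > c ∧ Z p.2 ≤ c} = {ω | Z ω > c} ×ˢ {ω | Z ω ≤ c} := rfl
    rw [this, Measure.prod_prod]
  -- numerator
  have hnum : ∀ c : ℝ, (μ.prod μ) ({p : Ω × Ω | Y p.1 > Y p.2} ∩ {p | Z p.1 > c ∧ Z p.2 ≤ c})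
      = (1/2) * (μ {ω | Z ω > c} * μ {ω | Z ω ≤ c}) := by
    intro c
    have hEmeas : MeasurableSet ({p : Ω × Ω | Y p.1 > Y p.2} ∩
        {p : Ω × Ω | Z p.1 > c ∧ Z p.2 ≤ c}) := by
      refine (measurableSet_lt (hY.comp measurable_snd) (hY.comp measurable_fst)).inter ?_
      have : {p : Ω × Ω | Z p.1 > c ∧ Z p.2 ≤ c} = {ω | Z ω > c} ×ˢ {ω | Z ω ≤ c} := rfl
      rw [this]; exact (hA c).prod (hB c)
    rw [Measure.prod_apply hEmeas]
    have hfiber : ∀ ω1 : Ω, μ (Prod.mk ω1 ⁻¹' ({p : Ω × Ω | Y p.1 > Y p.2} ∩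
        {p : Ω × Ω | Z p.1 > c ∧ Z p.2 ≤ c}))
        = ((fun y => ν (Iio y)) (Y ω1) * (Ioi c).indicator (fun _ => (1 : ℝ≥0∞)) (Z ω1))
            * μ {ω | Z ω ≤ c} := by
      intro ω1
      by_cases h : Z ω1 > c
      · have hset : Prod.mk ω1 ⁻¹' ({p : Ω × Ω | Y p.1 > Y p.2} ∩
            {p : Ω × Ω | Z p.1 > c ∧ Z p.2 ≤ c}) = Y ⁻¹' Iio (Y ω1) ∩ Z ⁻¹' Iic c := by
          ext ω2
          simp only [mem_preimage, mem_inter_iff, mem_setOf_eq, mem_Iio, mem_Iic]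
          constructor
          · rintro ⟨h1, _, h3⟩; exact ⟨h1, h3⟩
          · rintro ⟨h1, h2⟩; exact ⟨h1, h, h2⟩
        rw [hset, hindep.measure_inter_preimage_eq_mul _ _ measurableSet_Iio measurableSet_Iic,
          hIio]
        simp only [Set.indicator_of_mem (mem_Ioi.mpr h), mul_one]
        rfl
      · have hset : Prod.mk ω1 ⁻¹' ({p : Ω × Ω | Y p.1 > Y p.2} ∩
            {p : Ω × Ω | Z p.1 > c ∧ Z p.2 ≤ c}) = ∅ := by
          ext ω2
          simp only [mem_preimage, mem_inter_iff, mem_setOf_eq, mem_empty_iff_false, iff_false]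
          rintro ⟨_, h2, _⟩; exact h h2
        rw [hset]
        simp [Set.indicator_of_notMem, h]
    simp_rw [hfiber]
    have hmeasF : Measurable (fun ω => ν (Iio (Y ω)) *
        (Ioi c).indicator (fun _ => (1 : ℝ≥0∞)) (Z ω)) :=
      (hg.comp hY).mul ((measurable_one.indicator measurableSet_Ioi).comp hZ)
    rw [lintegral_mul_const _ hmeasF]
    have hsplit : ∫⁻ ω1, ν (Iio (Y ω1)) *
        (Ioi c).indicator (fun _ => (1 : ℝ≥0∞)) (Z ω1) ∂μ
        = (∫⁻ ω1, ν (Iio (Y ω1)) ∂μ) *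
          ∫⁻ ω1, (Ioi c).indicator (fun _ => (1 : ℝ≥0∞)) (Z ω1) ∂μ := by
      have := lintegral_mul_eq_lintegral_mul_lintegral_of_indepFun
        (μ := μ) (f := (fun y => ν (Iio y)) ∘ Y)
        (g := ((Ioi c).indicator (fun _ => (1 : ℝ≥0∞))) ∘ Z)
        (hg.comp hY) ((measurable_one.indicator measurableSet_Ioi).comp hZ)
        (hindep.comp hg (measurable_one.indicator measurableSet_Ioi))
      simpa [Function.comp, Pi.mul_apply] using this
    rw [hsplit]
    have hY2 : ∫⁻ ω1, ν (Iio (Y ω1)) ∂μ = 1/2 := by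
      rw [← lintegral_map hg hY, ← hνdef, half]
    have hZ2 : ∫⁻ ω1, (Ioi c).indicator (fun _ => (1 : ℝ≥0∞)) (Z ω1) ∂μ
        = μ {ω | Z ω > c} := by
      have : (fun ω1 => (Ioi c).indicator (fun _ => (1 : ℝ≥0∞)) (Z ω1))
          = (Z ⁻¹' Ioi c).indicator (fun _ => (1 : ℝ≥0∞)) := by
        ext ω1
        by_cases h : Z ω1 ∈ Ioi c <;> simp [h, Set.indicator_of_mem, Set.indicator_of_notMem]
      rw [this]
      exact lintegral_indicator_one (hZ measurableSet_Ioi)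
    rw [hY2, hZ2, mul_assoc]
  -- first part
  have main : ∀ c, 0 < μ {ω | Z ω > c} → μ {ω | Z ω > c} < 1 → AUC μ Y Z c = 1/2 := by
    intro c hpos hlt
    have hBpos : μ {ω | Z ω ≤ c} ≠ 0 := by
      have hcompl : {ω | Z ω ≤ c} = {ω | Z ω > c}ᶜ := by
        ext ω; simp [not_lt]
      rw [hcompl, measure_compl (hA c) (measure_ne_top μ _), measure_univ]
      intro hcon
      rw [tsub_eq_zero_iff_le] at hcon
      exact absurd hcon (not_le.mpr hlt)
    have hmne : (μ.prod μ) {p : Ω × Ω | Z p.1 > c ∧ Z p.2 ≤ c} ≠ 0 := by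
      rw [hm c]
      exact mul_ne_zero hpos.ne' hBpos
    have hmfin : (μ.prod μ) {p : Ω × Ω | Z p.1 > c ∧ Z p.2 ≤ c} ≠ ⊤ := by
      rw [hm c]
      exact ENNReal.mul_ne_top (measure_ne_top μ _) (measure_ne_top μ _)
    rw [AUC, if_neg hmne, hnum c, ← hm c, ENNReal.toReal_mul]
    have hden : ((μ.prod μ) {p : Ω × Ω | Z p.1 > c ∧ Z p.2 ≤ c}).toReal ≠ 0 :=
      ENNReal.toReal_ne_zero.mpr ⟨hmne, hmfin⟩
    rw [mul_div_assoc, div_self hden, mul_one]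
    norm_num
  refine ⟨main, ?_⟩
  have heq : ∀ t, AUC μ Y Z t * f t = 1/2 * f t := by
    intro t
    by_cases h : f t = 0
    · rw [h, mul_zero, mul_zero]
    · rw [main t (hf_supp t h).1 (hf_supp t h).2]
  simp_rw [heq]
  rw [integral_const_mul, hf_int, mul_one]
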